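/- Let k ≥ 3 and n ≥ 1 be integers, let a_1,...,a_n be positive integers with s = Σ_i a_i such that k divides s, let ε = 1/(2n), δ = 1/4, and let ρ be an integer with ρ ≤ −(max_i a_i + 1). Let (G,w) be the ASHG with: a vertex x; a cycle y_1,...,y_k all of whose edges have weight 2s − s/k; a cycle z_1,...,z_k all of whose edges have weight −s; edges x y_i of weight 2s + 2s/k and y_i z_i of weight 2s + s/k + δ for every i ∈ {1,...,k}; for every i ∈ {1,...,n} a clique on vertices v_i^1,...,v_i^k all of whose edges have weight ρ; and edges v_i^j y_j of weight a_i + ε and v_i^j z_j of weight −a_i for every i ∈ {1,...,n} and j ∈ {1,...,k}. Let 𝒫 consist of the part {x, y_1,...,y_k} together with singletons for all other vertices. Then 𝒫 admits a blocking coalition if and only if the index set {1,...,n} can be partitioned into sets Q_1,...,Q_k with Σ_{i∈Q_j} a_i = s/k for every j ∈ {1,...,k}. -/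

import Mathlib

open Finset

noncomputable section
open scoped Classical

variable {V : Type*}

/-- The utility of agent `u` in the coalition `X`: the sum of the weights of the
edges joining `u` to members of `X`. -/
def ut (G : SimpleGraph V) (w : V → V → ℚ) (X : Finset V) (u : V) : ℚ :=
  ∑ v ∈ X.filter (fun v => G.Adj u v), w u v

/-- `P` encodes a partition of the vertex set: `P u` is the part containing `u`. -/
def IsPartitionFun (P : V → Finset V) : Prop :=
  (∀ u, u ∈ P u) ∧ ∀ u v, v ∈ P u → P v = P u

/-- `X` is a blocking coalition for the partition `P`. -/
def Blocking (G : SimpleGraph V) (w : V → V → ℚ) (P : V → Finset V)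
    (X : Finset V) : Prop :=
  X.Nonempty ∧ ∀ u ∈ X, ut G w (P u) u < ut G w X u

/-- The partition `P` is core stable: it admits no blocking coalition. -/
def CoreStable (G : SimpleGraph V) (w : V → V → ℚ) (P : V → Finset V) : Prop :=
  ∀ X : Finset V, ¬ Blocking G w P X

/-- The partition `P` is `k`-core stable: it admits no blocking coalition of size at most `k`. -/
def KCoreStable (k : ℕ) (G : SimpleGraph V) (w : V → V → ℚ) (P : V → Finset V) : Prop :=
  ∀ X : Finset V, X.card ≤ k → ¬ Blocking G w P X

/-- The vertices of the Bin Packing gadget. -/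
inductive BPVtx (n k : ℕ) : Type
  | x : BPVtx n k
  | y : Fin k → BPVtx n k
  | z : Fin k → BPVtx n k
  | v : Fin n → Fin k → BPVtx n k
  deriving DecidableEq, Fintype

/-- One direction of each edge of the Bin Packing gadget. -/
def f10 {n k : ℕ} (a : Fin n → ℤ) (s ρ : ℤ) (ε δ : ℚ) :
    BPVtx n k → BPVtx n k → ℚ
  | BPVtx.x, BPVtx.y _ => 2 * (s : ℚ) + 2 * (s : ℚ) / (k : ℚ)
  | BPVtx.y j, BPVtx.y j' => if (j' : ℕ) = ((j : ℕ) + 1) % k then 2 * (s : ℚ) - (s : ℚ) / (k : ℚ) else 0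
  | BPVtx.z j, BPVtx.z j' => if (j' : ℕ) = ((j : ℕ) + 1) % k then -(s : ℚ) else 0
  | BPVtx.y j, BPVtx.z j' => if j = j' then 2 * (s : ℚ) + (s : ℚ) / (k : ℚ) + δ else 0
  | BPVtx.v i j, BPVtx.v i' j' => if i = i' ∧ j < j' then (ρ : ℚ) else 0
  | BPVtx.v i j, BPVtx.y j' => if j = j' then (a i : ℚ) + ε else 0
  | BPVtx.v i j, BPVtx.z j' => if j = j' then -(a i : ℚ) else 0
  | _, _ => 0

/-- The (symmetric) weight function of the Bin Packing gadget. -/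
def w10 {n k : ℕ} (a : Fin n → ℤ) (s ρ : ℤ) (ε δ : ℚ)
    (u v : BPVtx n k) : ℚ :=
  f10 a s ρ ε δ u v + f10 a s ρ ε δ v u

/-- The partition `{x, y_1, …, y_k}` plus singletons. -/
def P10 {n k : ℕ} : BPVtx n k → Finset (BPVtx n k)
  | BPVtx.x => insert BPVtx.x (univ.image BPVtx.y)
  | BPVtx.y _ => insert BPVtx.x (univ.image BPVtx.y)
  | BPVtx.z j => {BPVtx.z j}
  | BPVtx.v i j => {BPVtx.v i j}

namespace BPGadget

open BPVtx

variable {n k : ℕ}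

/-- Equivalence of the vertex type with a sum type. -/
def equivSum : BPVtx n k ≃ (Unit ⊕ Fin k ⊕ Fin k ⊕ Fin n × Fin k) where
  toFun u := match u with
    | BPVtx.x => Sum.inl ()
    | BPVtx.y j => Sum.inr (Sum.inl j)
    | BPVtx.z j => Sum.inr (Sum.inr (Sum.inl j))
    | BPVtx.v i j => Sum.inr (Sum.inr (Sum.inr (i, j)))
  invFun u := match u with
    | Sum.inl _ => BPVtx.x
    | Sum.inr (Sum.inl j) => BPVtx.y j
    | Sum.inr (Sum.inr (Sum.inl j)) => BPVtx.z j
    | Sum.inr (Sum.inr (Sum.inr (i, j))) => BPVtx.v i j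
  left_inv u := by cases u <;> rfl
  right_inv u := by rcases u with _ | j | j | ⟨i, j⟩ <;> rfl

lemma sum_bpvtx (g : BPVtx n k → ℚ) :
    ∑ u : BPVtx n k, g u
      = g BPVtx.x + (∑ j, g (BPVtx.y j)) + (∑ j, g (BPVtx.z j))
        + ∑ i, ∑ j, g (BPVtx.v i j) := by
  rw [← Equiv.sum_comp (equivSum (n := n) (k := k)).symm g]
  simp [Fintype.sum_sum_type, Fintype.sum_prod_type, equivSum]
  ring

lemma sum_mem_bpvtx (X : Finset (BPVtx n k)) (g : BPVtx n k → ℚ) :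
    ∑ u ∈ X, g u
      = (if BPVtx.x ∈ X then g BPVtx.x else 0)
        + (∑ j, if BPVtx.y j ∈ X then g (BPVtx.y j) else 0)
        + (∑ j, if BPVtx.z j ∈ X then g (BPVtx.z j) else 0)
        + ∑ i, ∑ j, if BPVtx.v i j ∈ X then g (BPVtx.v i j) else 0 := by
  rw [← sum_bpvtx (fun u => if u ∈ X then g u else 0)]
  rw [Finset.sum_ite_mem, Finset.univ_inter]

end BPGadget
namespace BPGadget

variable {n k : ℕ} {a : Fin n → ℤ} {s ρ : ℤ} {ε δ : ℚ}

lemma w10_symm (u v : BPVtx n k) : w10 a s ρ ε δ u v = w10 a s ρ ε δ v u :=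
  add_comm _ _

lemma w10_self (hk : 3 ≤ k) (u : BPVtx n k) : w10 a s ρ ε δ u u = 0 := by
  have hmod : ∀ j : Fin k, ¬ ((j : ℕ) = ((j : ℕ) + 1) % k) := by
    intro j h
    rcases lt_or_ge ((j : ℕ) + 1) k with h' | h'
    · rw [Nat.mod_eq_of_lt h'] at h; omega
    · have : (j : ℕ) + 1 = k := by have := j.isLt; omega
      rw [this, Nat.mod_self] at h; omega
  cases u with
  | x => simp [w10, f10]
  | y j => simp [w10, f10, hmod j]
  | z j => simp [w10, f10, hmod j]
  | v i j => simp [w10, f10]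

lemma ut_eq (hk : 3 ≤ k) (X : Finset (BPVtx n k)) (u : BPVtx n k) :
    ut (SimpleGraph.fromRel fun u v => w10 a s ρ ε δ u v ≠ 0)
      (w10 a s ρ ε δ) X u = ∑ v ∈ X, w10 a s ρ ε δ u v := by
  rw [ut, Finset.sum_filter]
  refine Finset.sum_congr rfl fun v _ => ?_
  by_cases h : (SimpleGraph.fromRel fun u v => w10 a s ρ ε δ u v ≠ 0).Adj u v
  · rw [if_pos h]
  · rw [if_neg h]
    rw [SimpleGraph.fromRel_adj] at h
    push_neg at h
    by_cases huv : u = v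
    · rw [huv, w10_self hk]
    · exact ((h huv).1).symm

lemma succ_cond (hk : 3 ≤ k) [NeZero k] (j j' : Fin k) :
    ((j' : ℕ) = ((j : ℕ) + 1) % k) ↔ j' = j + 1 := by
  rw [Fin.ext_iff, Fin.add_def, Fin.val_one', Nat.mod_eq_of_lt (show 1 < k by omega)]

lemma succ_cond' (hk : 3 ≤ k) [NeZero k] (j j' : Fin k) :
    ((j : ℕ) = ((j' : ℕ) + 1) % k) ↔ j' = j - 1 := by
  rw [succ_cond hk, eq_sub_iff_add_eq]
  exact eq_comm

lemma sum_ite_ite {α : Type*} [Fintype α] [DecidableEq α] (Q : α → Prop)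
    [DecidablePred Q] (t : α) (c : ℚ) :
    ∑ u : α, (if Q u then (if u = t then c else 0) else 0)
      = if Q t then c else 0 := by
  rw [Finset.sum_congr rfl (fun u _ =>
    show (if Q u then (if u = t then c else 0) else 0)
      = (if u = t then (if Q u then c else 0) else 0) by split_ifs <;> simp_all)]
  rw [Finset.sum_ite_eq' Finset.univ t (fun u => if Q u then c else 0)]
  simp

end BPGadget

namespace BPGadget
variable {k : ℕ}
lemma add_one_ne_sub_one (hk : 3 ≤ k) [NeZero k] (j : Fin k) : j + 1 ≠ j - 1 := by
  intro h
  have h1 : ((j + 1 : Fin k) : ℕ) = ((j : ℕ) + 1) % k := (succ_cond hk j (j + 1)).mpr rfl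
  have h2 : ((j : ℕ)) = (((j - 1 : Fin k) : ℕ) + 1) % k := (succ_cond' hk j (j - 1)).mpr rfl
  rw [← h, h1] at h2
  have hj : (j : ℕ) < k := j.isLt
  rcases Nat.lt_or_ge ((j : ℕ) + 1) k with h' | h'
  · rw [Nat.mod_eq_of_lt h'] at h2
    rcases Nat.lt_or_ge ((j : ℕ) + 2) k with h'' | h''
    · rw [Nat.mod_eq_of_lt (by omega)] at h2; omega
    · have hh : (j : ℕ) + 1 + 1 = k := by omega
      rw [hh, Nat.mod_self] at h2; omega
  · have hh : (j : ℕ) + 1 = k := by omega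
    rw [hh, Nat.mod_self] at h2
    rw [Nat.mod_eq_of_lt (by omega)] at h2; omega
end BPGadget
namespace BPGadget

variable {n k : ℕ} {a : Fin n → ℤ} {s ρ : ℤ} {ε δ : ℚ}

lemma sumX_x (X : Finset (BPVtx n k)) :
    ∑ u ∈ X, w10 a s ρ ε δ BPVtx.x u
      = ∑ j, (if BPVtx.y j ∈ X then 2 * (s : ℚ) + 2 * (s : ℚ) / (k : ℚ) else 0) := by
  rw [sum_mem_bpvtx]
  simp [w10, f10]

lemma sumX_y (hk : 3 ≤ k) [NeZero k] (X : Finset (BPVtx n k)) (j : Fin k) :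
    ∑ u ∈ X, w10 a s ρ ε δ (BPVtx.y j) u
      = (if BPVtx.x ∈ X then 2 * (s : ℚ) + 2 * (s : ℚ) / (k : ℚ) else 0)
        + (if BPVtx.y (j + 1) ∈ X then 2 * (s : ℚ) - (s : ℚ) / (k : ℚ) else 0)
        + (if BPVtx.y (j - 1) ∈ X then 2 * (s : ℚ) - (s : ℚ) / (k : ℚ) else 0)
        + (if BPVtx.z j ∈ X then 2 * (s : ℚ) + (s : ℚ) / (k : ℚ) + δ else 0)
        + ∑ i, (if BPVtx.v i j ∈ X then (a i : ℚ) + ε else 0) := by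
  rw [sum_mem_bpvtx]
  have h1 : (if BPVtx.x ∈ X then w10 a s ρ ε δ (BPVtx.y j) BPVtx.x else 0)
      = (if BPVtx.x ∈ X then 2 * (s : ℚ) + 2 * (s : ℚ) / (k : ℚ) else 0) := by
    simp [w10, f10]
  have h2 : (∑ j', if BPVtx.y j' ∈ X then w10 a s ρ ε δ (BPVtx.y j) (BPVtx.y j') else 0)
      = (if BPVtx.y (j + 1) ∈ X then 2 * (s : ℚ) - (s : ℚ) / (k : ℚ) else 0)
        + (if BPVtx.y (j - 1) ∈ X then 2 * (s : ℚ) - (s : ℚ) / (k : ℚ) else 0) := by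
    rw [Finset.sum_congr rfl (fun j' _ =>
      show (if BPVtx.y j' ∈ X then w10 a s ρ ε δ (BPVtx.y j) (BPVtx.y j') else 0)
        = (if BPVtx.y j' ∈ X then (if j' = j + 1 then 2 * (s : ℚ) - (s : ℚ) / (k : ℚ) else 0) else 0)
          + (if BPVtx.y j' ∈ X then (if j' = j - 1 then 2 * (s : ℚ) - (s : ℚ) / (k : ℚ) else 0) else 0) by
      have hne := add_one_ne_sub_one hk j
      have e1 : ((j' : ℕ) = ((j : ℕ) + 1) % k) = (j' = j + 1) := propext (succ_cond hk j j')
      have e2 : ((j : ℕ) = ((j' : ℕ) + 1) % k) = (j' = j - 1) := propext (succ_cond' hk j j')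
      simp only [w10, f10]
      simp only [e1, e2]
      split_ifs <;> first | ring | simp_all)]
    rw [Finset.sum_add_distrib, sum_ite_ite, sum_ite_ite]
  have h3 : (∑ j', if BPVtx.z j' ∈ X then w10 a s ρ ε δ (BPVtx.y j) (BPVtx.z j') else 0)
      = (if BPVtx.z j ∈ X then 2 * (s : ℚ) + (s : ℚ) / (k : ℚ) + δ else 0) := by
    rw [Finset.sum_congr rfl (fun j' _ =>
      show (if BPVtx.z j' ∈ X then w10 a s ρ ε δ (BPVtx.y j) (BPVtx.z j') else 0)
        = (if BPVtx.z j' ∈ X then (if j' = j then 2 * (s : ℚ) + (s : ℚ) / (k : ℚ) + δ else 0) else 0) by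
      simp only [w10, f10, eq_comm (a := j)]
      split_ifs <;> ring)]
    rw [sum_ite_ite]
  have h4 : (∑ i, ∑ j', if BPVtx.v i j' ∈ X then w10 a s ρ ε δ (BPVtx.y j) (BPVtx.v i j') else 0)
      = ∑ i, (if BPVtx.v i j ∈ X then (a i : ℚ) + ε else 0) := by
    refine Finset.sum_congr rfl fun i _ => ?_
    rw [Finset.sum_congr rfl (fun j' _ =>
      show (if BPVtx.v i j' ∈ X then w10 a s ρ ε δ (BPVtx.y j) (BPVtx.v i j') else 0)
        = (if BPVtx.v i j' ∈ X then (if j' = j then (a i : ℚ) + ε else 0) else 0) by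
      simp only [w10, f10]
      split_ifs <;> ring)]
    rw [sum_ite_ite]
  rw [h1, h2, h3, h4]
  ring

lemma sumX_z (hk : 3 ≤ k) [NeZero k] (X : Finset (BPVtx n k)) (j : Fin k) :
    ∑ u ∈ X, w10 a s ρ ε δ (BPVtx.z j) u
      = (if BPVtx.y j ∈ X then 2 * (s : ℚ) + (s : ℚ) / (k : ℚ) + δ else 0)
        + (if BPVtx.z (j + 1) ∈ X then -(s : ℚ) else 0)
        + (if BPVtx.z (j - 1) ∈ X then -(s : ℚ) else 0)
        + ∑ i, (if BPVtx.v i j ∈ X then -(a i : ℚ) else 0) := by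
  rw [sum_mem_bpvtx]
  have h1 : (if BPVtx.x ∈ X then w10 a s ρ ε δ (BPVtx.z j) BPVtx.x else 0) = 0 := by
    simp [w10, f10]
  have h2 : (∑ j', if BPVtx.y j' ∈ X then w10 a s ρ ε δ (BPVtx.z j) (BPVtx.y j') else 0)
      = (if BPVtx.y j ∈ X then 2 * (s : ℚ) + (s : ℚ) / (k : ℚ) + δ else 0) := by
    rw [Finset.sum_congr rfl (fun j' _ =>
      show (if BPVtx.y j' ∈ X then w10 a s ρ ε δ (BPVtx.z j) (BPVtx.y j') else 0)
        = (if BPVtx.y j' ∈ X then (if j' = j then 2 * (s : ℚ) + (s : ℚ) / (k : ℚ) + δ else 0) else 0) by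
      simp only [w10, f10, eq_comm (a := j')]
      split_ifs <;> ring)]
    rw [sum_ite_ite]
  have h3 : (∑ j', if BPVtx.z j' ∈ X then w10 a s ρ ε δ (BPVtx.z j) (BPVtx.z j') else 0)
      = (if BPVtx.z (j + 1) ∈ X then -(s : ℚ) else 0)
        + (if BPVtx.z (j - 1) ∈ X then -(s : ℚ) else 0) := by
    rw [Finset.sum_congr rfl (fun j' _ =>
      show (if BPVtx.z j' ∈ X then w10 a s ρ ε δ (BPVtx.z j) (BPVtx.z j') else 0)
        = (if BPVtx.z j' ∈ X then (if j' = j + 1 then -(s : ℚ) else 0) else 0)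
          + (if BPVtx.z j' ∈ X then (if j' = j - 1 then -(s : ℚ) else 0) else 0) by
      have hne := add_one_ne_sub_one hk j
      have e1 : ((j' : ℕ) = ((j : ℕ) + 1) % k) = (j' = j + 1) := propext (succ_cond hk j j')
      have e2 : ((j : ℕ) = ((j' : ℕ) + 1) % k) = (j' = j - 1) := propext (succ_cond' hk j j')
      simp only [w10, f10]
      simp only [e1, e2]
      split_ifs <;> first | ring | simp_all)]
    rw [Finset.sum_add_distrib, sum_ite_ite, sum_ite_ite]
  have h4 : (∑ i, ∑ j', if BPVtx.v i j' ∈ X then w10 a s ρ ε δ (BPVtx.z j) (BPVtx.v i j') else 0)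
      = ∑ i, (if BPVtx.v i j ∈ X then -(a i : ℚ) else 0) := by
    refine Finset.sum_congr rfl fun i _ => ?_
    rw [Finset.sum_congr rfl (fun j' _ =>
      show (if BPVtx.v i j' ∈ X then w10 a s ρ ε δ (BPVtx.z j) (BPVtx.v i j') else 0)
        = (if BPVtx.v i j' ∈ X then (if j' = j then -(a i : ℚ) else 0) else 0) by
      simp only [w10, f10]
      split_ifs <;> ring)]
    rw [sum_ite_ite]
  rw [h1, h2, h3, h4]
  ring

lemma sumX_v (hk : 3 ≤ k) [NeZero k] (X : Finset (BPVtx n k)) (i : Fin n) (j : Fin k) :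
    ∑ u ∈ X, w10 a s ρ ε δ (BPVtx.v i j) u
      = (if BPVtx.y j ∈ X then (a i : ℚ) + ε else 0)
        + (if BPVtx.z j ∈ X then -(a i : ℚ) else 0)
        + ∑ j', (if BPVtx.v i j' ∈ X ∧ j' ≠ j then (ρ : ℚ) else 0) := by
  rw [sum_mem_bpvtx]
  have h1 : (if BPVtx.x ∈ X then w10 a s ρ ε δ (BPVtx.v i j) BPVtx.x else 0) = 0 := by
    simp [w10, f10]
  have h2 : (∑ j', if BPVtx.y j' ∈ X then w10 a s ρ ε δ (BPVtx.v i j) (BPVtx.y j') else 0)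
      = (if BPVtx.y j ∈ X then (a i : ℚ) + ε else 0) := by
    rw [Finset.sum_congr rfl (fun j' _ =>
      show (if BPVtx.y j' ∈ X then w10 a s ρ ε δ (BPVtx.v i j) (BPVtx.y j') else 0)
        = (if BPVtx.y j' ∈ X then (if j' = j then (a i : ℚ) + ε else 0) else 0) by
      simp only [w10, f10, eq_comm (a := j')]
      split_ifs <;> ring)]
    rw [sum_ite_ite]
  have h3 : (∑ j', if BPVtx.z j' ∈ X then w10 a s ρ ε δ (BPVtx.v i j) (BPVtx.z j') else 0)
      = (if BPVtx.z j ∈ X then -(a i : ℚ) else 0) := by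
    rw [Finset.sum_congr rfl (fun j' _ =>
      show (if BPVtx.z j' ∈ X then w10 a s ρ ε δ (BPVtx.v i j) (BPVtx.z j') else 0)
        = (if BPVtx.z j' ∈ X then (if j' = j then -(a i : ℚ) else 0) else 0) by
      simp only [w10, f10, eq_comm (a := j')]
      split_ifs <;> ring)]
    rw [sum_ite_ite]
  have h4 : (∑ i', ∑ j', if BPVtx.v i' j' ∈ X then w10 a s ρ ε δ (BPVtx.v i j) (BPVtx.v i' j') else 0)
      = ∑ j', (if BPVtx.v i j' ∈ X ∧ j' ≠ j then (ρ : ℚ) else 0) := by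
    have key : ∀ i' j', (if BPVtx.v i' j' ∈ X then w10 a s ρ ε δ (BPVtx.v i j) (BPVtx.v i' j') else 0)
        = (if i' = i then (if BPVtx.v i' j' ∈ X ∧ j' ≠ j then (ρ : ℚ) else 0) else 0) := by
      intro i' j'
      simp only [w10, f10]
      by_cases hii : i' = i
      · subst hii
        by_cases hmem : BPVtx.v i' j' ∈ X
        · by_cases hjj : j' = j
          · subst hjj; simp [lt_irrefl]
          · rcases lt_or_gt_of_ne hjj with h | h
            · simp [hmem, hjj, h, not_lt_of_gt h]
            · simp [hmem, hjj, h, not_lt_of_gt h]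
        · simp [hmem]
      · simp [hii, Ne.symm hii, fun h : i = i' => hii h.symm]
    rw [Finset.sum_congr rfl (fun i' _ => Finset.sum_congr rfl (fun j' _ => key i' j'))]
    rw [Finset.sum_congr rfl (fun i' _ =>
      show (∑ j', if i' = i then (if BPVtx.v i' j' ∈ X ∧ j' ≠ j then (ρ : ℚ) else 0) else 0)
        = (if i' = i then (∑ j', if BPVtx.v i' j' ∈ X ∧ j' ≠ j then (ρ : ℚ) else 0) else 0) by
      split_ifs <;> simp)]
    rw [Finset.sum_ite_eq' Finset.univ i (fun i' => ∑ j', if BPVtx.v i' j' ∈ X ∧ j' ≠ j then (ρ : ℚ) else 0)]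
    simp
  rw [h1, h2, h3, h4]
  ring

end BPGadget
namespace BPGadget

variable {n k : ℕ} {a : Fin n → ℤ} {s ρ : ℤ} {ε δ : ℚ}

lemma mem_part_x : BPVtx.x ∈ (insert BPVtx.x (Finset.univ.image BPVtx.y) : Finset (BPVtx n k)) := by
  simp

lemma mem_part_y (j : Fin k) :
    BPVtx.y j ∈ (insert BPVtx.x (Finset.univ.image BPVtx.y) : Finset (BPVtx n k)) := by
  simp

lemma not_mem_part_z (j : Fin k) :
    BPVtx.z j ∉ (insert BPVtx.x (Finset.univ.image BPVtx.y) : Finset (BPVtx n k)) := by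
  simp

lemma not_mem_part_v (i : Fin n) (j : Fin k) :
    BPVtx.v i j ∉ (insert BPVtx.x (Finset.univ.image BPVtx.y) : Finset (BPVtx n k)) := by
  simp

lemma utP_y (hk : 3 ≤ k) [NeZero k] (j : Fin k) :
    ∑ u ∈ (insert BPVtx.x (Finset.univ.image BPVtx.y) : Finset (BPVtx n k)),
        w10 a s ρ ε δ (BPVtx.y j) u = 6 * (s : ℚ) := by
  rw [sumX_y hk]
  rw [if_pos mem_part_x, if_pos (mem_part_y _), if_pos (mem_part_y _),
    if_neg (not_mem_part_z _)]
  rw [Finset.sum_congr rfl (fun i _ => if_neg (not_mem_part_v i j))]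
  rw [Finset.sum_const_zero]
  ring

lemma utP_x (hk : 3 ≤ k) [NeZero k] :
    ∑ u ∈ (insert BPVtx.x (Finset.univ.image BPVtx.y) : Finset (BPVtx n k)),
        w10 a s ρ ε δ BPVtx.x u = (k : ℚ) * (2 * (s : ℚ) + 2 * (s : ℚ) / (k : ℚ)) := by
  rw [sumX_x]
  rw [Finset.sum_congr rfl (fun j _ => if_pos (mem_part_y j))]
  rw [Finset.sum_const, Finset.card_univ, Fintype.card_fin, nsmul_eq_mul]

lemma utP_z (hk : 3 ≤ k) (j : Fin k) :
    ∑ u ∈ ({BPVtx.z j} : Finset (BPVtx n k)), w10 a s ρ ε δ (BPVtx.z j) u = 0 := by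
  rw [Finset.sum_singleton, w10_self hk]

lemma utP_v (hk : 3 ≤ k) (i : Fin n) (j : Fin k) :
    ∑ u ∈ ({BPVtx.v i j} : Finset (BPVtx n k)), w10 a s ρ ε δ (BPVtx.v i j) u = 0 := by
  rw [Finset.sum_singleton, w10_self hk]

end BPGadget
open BPGadget in
open Fin.NatCast in
open Fin.CommRing in
set_option maxHeartbeats 2000000 in
/-- the Bin Packing gadget admits a blocking coalition iff
`a_1, …, a_n` can be partitioned into `k` sets each of sum `s/k`. -/
theorem binpacking_gadget_blocking_iff (n k : ℕ) (hn : 1 ≤ n) (hk : 3 ≤ k)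
    (a : Fin n → ℤ) (ha : ∀ i, 0 < a i) (s : ℤ) (hs : s = ∑ i, a i)
    (hdvd : (k : ℤ) ∣ s)
    (ρ : ℤ) (hρ : ∀ i, ρ ≤ -(a i + 1))
    (ε δ : ℚ) (hε : ε = 1 / (2 * n)) (hδ : δ = 1 / 4) :
    (∃ X : Finset (BPVtx n k),
        Blocking (SimpleGraph.fromRel fun u v => w10 a s ρ ε δ u v ≠ 0)
          (w10 a s ρ ε δ) P10 X)
      ↔ ∃ Q : Fin n → Fin k,
          ∀ j : Fin k, (k : ℤ) * ∑ i ∈ univ.filter (fun i => Q i = j), a i = s := by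
  haveI : NeZero k := ⟨by omega⟩
  subst hδ
  have hk0 : (k : ℚ) ≠ 0 := Nat.cast_ne_zero.mpr (by omega)
  have hkpos : (0 : ℚ) < (k : ℚ) := by positivity
  have hn1 : (1 : ℚ) ≤ (n : ℚ) := by exact_mod_cast hn
  have hsn : (n : ℤ) ≤ s := by
    rw [hs]
    calc (n : ℤ) = ∑ _i : Fin n, 1 := by simp
    _ ≤ ∑ i, a i := Finset.sum_le_sum fun i _ => ha i
  have hs1 : (1 : ℚ) ≤ (s : ℚ) := by
    have : (1 : ℤ) ≤ s := le_trans (by exact_mod_cast hn) hsn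
    exact_mod_cast this
  have hεpos : 0 < ε := by
    rw [hε]; apply div_pos one_pos; linarith
  have hnε : (n : ℚ) * ε = 1 / 2 := by
    rw [hε]; field_simp
  have hεhalf : ε ≤ 1 / 2 := by nlinarith
  have hqpos : (0 : ℚ) < (s : ℚ) / (k : ℚ) := by
    apply div_pos <;> linarith
  have hqle : (s : ℚ) / (k : ℚ) ≤ (s : ℚ) := by
    rw [div_le_iff₀ hkpos]
    nlinarith [mul_le_mul_of_nonneg_left (show (1:ℚ) ≤ (k:ℚ) by
      exact_mod_cast Nat.one_le_iff_ne_zero.mpr (by omega)) (show (0:ℚ) ≤ (s:ℚ) by linarith)]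
  have haQ : ∀ i, (1 : ℚ) ≤ (a i : ℚ) := fun i => by
    exact_mod_cast (by have := ha i; omega : (1 : ℤ) ≤ a i)
  have hρQ : ∀ i, (ρ : ℚ) ≤ -((a i : ℚ) + 1) := fun i => by
    exact_mod_cast hρ i
  have hsum : ∑ i, (a i : ℚ) = (s : ℚ) := by rw [hs]; push_cast; ring
  obtain ⟨t, ht⟩ := hdvd
  have hqt : (s : ℚ) / (k : ℚ) = (t : ℚ) := by
    rw [div_eq_iff hk0, ht]; push_cast; ring
  constructor
  · rintro ⟨X, hne, hblock⟩
    have hut : ∀ u ∈ X, ∑ v ∈ P10 u, w10 a s ρ ε (1/4) u v < ∑ v ∈ X, w10 a s ρ ε (1/4) u v := by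
      intro u hu
      have h := hblock u hu
      rwa [ut_eq hk, ut_eq hk] at h
    -- Step 1: x ∉ X
    have hxX : BPVtx.x ∉ X := by
      intro hx
      have h := hut _ hx
      simp only [P10] at h
      rw [utP_x hk, sumX_x] at h
      have hb : ∑ j, (if BPVtx.y j ∈ X then 2 * (s : ℚ) + 2 * (s : ℚ) / (k : ℚ) else 0)
          ≤ ∑ _j : Fin k, (2 * (s : ℚ) + 2 * (s : ℚ) / (k : ℚ)) :=
        Finset.sum_le_sum fun j _ => by
          have h2q : 2 * (s : ℚ) / (k : ℚ) = 2 * ((s : ℚ) / (k : ℚ)) := by ring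
          split_ifs <;> linarith
      rw [Finset.sum_const, Finset.card_univ, Fintype.card_fin, nsmul_eq_mul] at hb
      linarith
    -- utility inequality for v-vertices in X
    have hvpos : ∀ i j, BPVtx.v i j ∈ X →
        0 < (if BPVtx.y j ∈ X then (a i : ℚ) + ε else 0)
          + (if BPVtx.z j ∈ X then -(a i : ℚ) else 0)
          + ∑ j', (if BPVtx.v i j' ∈ X ∧ j' ≠ j then (ρ : ℚ) else 0) := by
      intro i j hv
      have h := hut _ hv
      simp only [P10] at h
      rwa [utP_v hk, sumX_v hk] at h
    have hclnonpos : ∀ i j, ∑ j', (if BPVtx.v i j' ∈ X ∧ j' ≠ j then (ρ : ℚ) else 0) ≤ 0 :=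
      fun i j => Finset.sum_nonpos fun j' _ => by
        split_ifs
        · linarith [hρQ i, haQ i]
        · exact le_rfl
    have hznonpos : ∀ i j, (if BPVtx.z j ∈ X then -(a i : ℚ) else 0) ≤ 0 := fun i j => by
      split_ifs
      · linarith [haQ i]
      · exact le_rfl
    -- Step 2a: each v in X has its y in X
    have hvy : ∀ i j, BPVtx.v i j ∈ X → BPVtx.y j ∈ X := by
      intro i j hv
      by_contra hyn
      have h := hvpos i j hv
      rw [if_neg hyn] at h
      linarith [hznonpos i j, hclnonpos i j]
    -- Step 2b: at most one v per i
    have hvuniq : ∀ i j j', BPVtx.v i j ∈ X → BPVtx.v i j' ∈ X → j = j' := by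
      intro i j j' hv hv'
      by_contra hne'
      have h := hvpos i j hv
      have hcl : ∑ j'', (if BPVtx.v i j'' ∈ X ∧ j'' ≠ j then (ρ : ℚ) else 0) ≤ (ρ : ℚ) := by
        calc ∑ j'', (if BPVtx.v i j'' ∈ X ∧ j'' ≠ j then (ρ : ℚ) else 0)
            ≤ ∑ j'', (if j'' = j' then (ρ : ℚ) else 0) := by
              refine Finset.sum_le_sum fun j'' _ => ?_
              by_cases hj : j'' = j'
              · subst hj
                rw [if_pos rfl, if_pos ⟨hv', fun hh => hne' (hh ▸ rfl)⟩]
              · rw [if_neg hj]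
                split_ifs
                · linarith [hρQ i, haQ i]
                · exact le_rfl
          _ = (ρ : ℚ) := by
              rw [Finset.sum_ite_eq' Finset.univ j' (fun _ => (ρ : ℚ))]
              simp
      have hy : (if BPVtx.y j ∈ X then (a i : ℚ) + ε else 0) ≤ (a i : ℚ) + ε := by
        split_ifs
        · exact le_rfl
        · linarith [haQ i]
      linarith [hznonpos i j, hρQ i, haQ i]
    -- Step 3: z in X implies y in X
    have hzy : ∀ j, BPVtx.z j ∈ X → BPVtx.y j ∈ X := by
      intro j hz
      by_contra hyn
      have h := hut _ hz
      simp only [P10] at h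
      rw [utP_z hk, sumX_z hk, if_neg hyn] at h
      have h1 : (if BPVtx.z (j + 1) ∈ X then -(s : ℚ) else 0) ≤ 0 := by
        split_ifs
        · linarith
        · exact le_rfl
      have h2 : (if BPVtx.z (j - 1) ∈ X then -(s : ℚ) else 0) ≤ 0 := by
        split_ifs
        · linarith
        · exact le_rfl
      have h3 : ∑ i, (if BPVtx.v i j ∈ X then -(a i : ℚ) else 0) ≤ 0 :=
        Finset.sum_nonpos fun i _ => by
          split_ifs
          · linarith [haQ i]
          · exact le_rfl
      linarith
    -- Step 4: some y in X
    have hy0 : ∃ j, BPVtx.y j ∈ X := by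
      obtain ⟨u, hu⟩ := hne
      cases u with
      | x => exact absurd hu hxX
      | y j => exact ⟨j, hu⟩
      | z j => exact ⟨j, hzy j hu⟩
      | v i j => exact ⟨j, hvy i j hu⟩
    -- bound on the v-contribution to a y-vertex
    have hSv : ∀ j, ∑ i, (if BPVtx.v i j ∈ X then (a i : ℚ) + ε else 0) ≤ (s : ℚ) + 1 / 2 := by
      intro j
      calc ∑ i, (if BPVtx.v i j ∈ X then (a i : ℚ) + ε else 0)
          ≤ ∑ i, ((a i : ℚ) + ε) := Finset.sum_le_sum fun i _ => by
            split_ifs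
            · exact le_rfl
            · linarith [haQ i]
        _ = (s : ℚ) + (n : ℚ) * ε := by
            rw [Finset.sum_add_distrib, hsum, Finset.sum_const, Finset.card_univ,
              Fintype.card_fin, nsmul_eq_mul]
        _ = (s : ℚ) + 1 / 2 := by rw [hnε]
    -- Step 5: a y in X forces its cycle neighbours and its z into X
    have hyclose : ∀ j, BPVtx.y j ∈ X →
        BPVtx.y (j + 1) ∈ X ∧ BPVtx.y (j - 1) ∈ X ∧ BPVtx.z j ∈ X := by
      intro j hyj
      have h := hut _ hyj
      simp only [P10] at h
      rw [utP_y hk, sumX_y hk, if_neg hxX] at h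
      have hb1 : (if BPVtx.y (j + 1) ∈ X then 2 * (s : ℚ) - (s : ℚ) / (k : ℚ) else 0)
          ≤ 2 * (s : ℚ) - (s : ℚ) / (k : ℚ) := by split_ifs <;> linarith
      have hb2 : (if BPVtx.y (j - 1) ∈ X then 2 * (s : ℚ) - (s : ℚ) / (k : ℚ) else 0)
          ≤ 2 * (s : ℚ) - (s : ℚ) / (k : ℚ) := by split_ifs <;> linarith
      have hb3 : (if BPVtx.z j ∈ X then 2 * (s : ℚ) + (s : ℚ) / (k : ℚ) + (1/4 : ℚ) else 0)
          ≤ 2 * (s : ℚ) + (s : ℚ) / (k : ℚ) + (1/4 : ℚ) := by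
        split_ifs
        · exact le_rfl
        · linarith
      have hb4 := hSv j
      refine ⟨?_, ?_, ?_⟩
      · by_contra hmiss
        rw [if_neg hmiss] at h
        linarith
      · by_contra hmiss
        rw [if_neg hmiss] at h
        linarith
      · by_contra hmiss
        rw [if_neg hmiss] at h
        linarith
    -- Step 6: all y's and z's in X
    have hyall : ∀ j, BPVtx.y j ∈ X := by
      obtain ⟨j0, hj0⟩ := hy0
      have hstep : ∀ m : ℕ, BPVtx.y (j0 + (m : Fin k)) ∈ X := by
        intro m
        induction m with
        | zero => simpa using hj0
        | succ m ih =>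
          have hmem := (hyclose _ ih).1
          have hcast : (j0 + ((m + 1 : ℕ) : Fin k)) = (j0 + (m : Fin k)) + 1 := by
            push_cast
            ring
          rw [hcast]
          exact hmem
      intro j
      have hmem := hstep ((j - j0).val)
      rwa [Fin.cast_val_eq_self, show j0 + (j - j0) = j by ring] at hmem
    have hzall : ∀ j, BPVtx.z j ∈ X := fun j => (hyclose j (hyall j)).2.2
    -- Step 7: the filter sums all equal t
    have hAcast : ∀ j, ∑ i ∈ univ.filter (fun i => BPVtx.v i j ∈ X), (a i : ℚ)
        = ((∑ i ∈ univ.filter (fun i => BPVtx.v i j ∈ X), a i : ℤ) : ℚ) := by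
      intro j
      push_cast
      ring
    have hAt : ∀ j, ∑ i ∈ univ.filter (fun i => BPVtx.v i j ∈ X), a i = t := by
      intro j
      -- upper bound from z j
      have hz := hut _ (hzall j)
      simp only [P10] at hz
      rw [utP_z hk, sumX_z hk, if_pos (hyall j), if_pos (hzall (j + 1)),
        if_pos (hzall (j - 1))] at hz
      have hv1 : ∑ i, (if BPVtx.v i j ∈ X then -(a i : ℚ) else 0)
          = -((∑ i ∈ univ.filter (fun i => BPVtx.v i j ∈ X), a i : ℤ) : ℚ) := by
        rw [← Finset.sum_filter, Finset.sum_neg_distrib, hAcast j]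
      rw [hv1] at hz
      -- lower bound from y j
      have hy := hut _ (hyall j)
      simp only [P10] at hy
      rw [utP_y hk, sumX_y hk, if_neg hxX, if_pos (hyall (j + 1)), if_pos (hyall (j - 1)),
        if_pos (hzall j)] at hy
      have hv2 : ∑ i, (if BPVtx.v i j ∈ X then (a i : ℚ) + ε else 0)
          = ((∑ i ∈ univ.filter (fun i => BPVtx.v i j ∈ X), a i : ℤ) : ℚ)
            + ((univ.filter (fun i => BPVtx.v i j ∈ X)).card : ℚ) * ε := by
        rw [← Finset.sum_filter, Finset.sum_add_distrib, hAcast j, Finset.sum_const,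
          nsmul_eq_mul]
      rw [hv2] at hy
      have hcard : ((univ.filter (fun i => BPVtx.v i j ∈ X)).card : ℚ) * ε ≤ 1 / 2 := by
        have hc : ((univ.filter (fun i => BPVtx.v i j ∈ X)).card : ℚ) ≤ (n : ℚ) := by
          have hcc := Finset.card_filter_le univ (fun i => BPVtx.v i j ∈ X)
          rw [Finset.card_univ, Fintype.card_fin] at hcc
          exact_mod_cast hcc
        calc ((univ.filter (fun i => BPVtx.v i j ∈ X)).card : ℚ) * ε
            ≤ (n : ℚ) * ε := mul_le_mul_of_nonneg_right hc hεpos.le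
          _ = 1 / 2 := hnε
      have hcard0 : (0 : ℚ) ≤ ((univ.filter (fun i => BPVtx.v i j ∈ X)).card : ℚ) * ε := by
        positivity
      set A : ℤ := ∑ i ∈ univ.filter (fun i => BPVtx.v i j ∈ X), a i with hAdef
      have hub : (A : ℚ) < (t : ℚ) + 1 := by linarith [hqt]
      have hlb : (t : ℚ) - 1 < (A : ℚ) := by linarith [hqt]
      have hub' : A < t + 1 := by exact_mod_cast hub
      have hlb' : t - 1 < A := by exact_mod_cast hlb
      omega
    -- Step 8: every i is covered
    have hcover : ∀ i, ∃ j, BPVtx.v i j ∈ X := by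
      by_contra hc
      push_neg at hc
      obtain ⟨i0, hi0⟩ := hc
      have h1 : ∑ j, ∑ i ∈ univ.filter (fun i => BPVtx.v i j ∈ X), a i = s := by
        rw [Finset.sum_congr rfl (fun j _ => hAt j), Finset.sum_const, Finset.card_univ,
          Fintype.card_fin, nsmul_eq_mul, ← ht]
      have h2 : ∑ j, ∑ i ∈ univ.filter (fun i => BPVtx.v i j ∈ X), a i
          = ∑ i, ∑ j, (if BPVtx.v i j ∈ X then a i else 0) := by
        rw [Finset.sum_congr rfl (fun j _ => (Finset.sum_filter _ _))]
        exact Finset.sum_comm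
      have h3 : ∀ i, ∑ j, (if BPVtx.v i j ∈ X then a i else 0)
          ≤ (if i = i0 then 0 else a i) := by
        intro i
        by_cases hi : i = i0
        · subst hi
          rw [if_pos rfl]
          exact le_of_eq (Finset.sum_eq_zero fun j _ => if_neg (hi0 j))
        · rw [if_neg hi]
          rw [← Finset.sum_filter, Finset.sum_const, nsmul_eq_mul]
          have hc1 : (univ.filter (fun j => BPVtx.v i j ∈ X)).card ≤ 1 := by
            rw [Finset.card_le_one]
            intro j hj j' hj'
            rw [Finset.mem_filter] at hj hj'
            exact hvuniq i j j' hj.2 hj'.2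
          have hc1' : ((univ.filter (fun j => BPVtx.v i j ∈ X)).card : ℤ) ≤ 1 := by
            exact_mod_cast hc1
          have hmm := mul_le_mul_of_nonneg_right hc1' (ha i).le
          linarith
      have h4 : ∑ i, (if i = i0 then (0 : ℤ) else a i) = s - a i0 := by
        have h5 : ∑ i, (if i = i0 then (0 : ℤ) else a i) + ∑ i, (if i = i0 then a i else 0)
            = ∑ i, a i := by
          rw [← Finset.sum_add_distrib]
          exact Finset.sum_congr rfl fun i _ => by split_ifs <;> ring
        rw [Finset.sum_ite_eq' Finset.univ i0 a] at h5
        simp only [Finset.mem_univ, if_pos] at h5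
        omega
      have h6 : ∑ i, ∑ j, (if BPVtx.v i j ∈ X then a i else 0) ≤ s - a i0 := by
        rw [← h4]
        exact Finset.sum_le_sum fun i _ => h3 i
      have := ha i0
      omega
    choose Q hQmem using hcover
    refine ⟨Q, fun j => ?_⟩
    have hfilter : univ.filter (fun i => Q i = j) = univ.filter (fun i => BPVtx.v i j ∈ X) := by
      ext i
      simp only [Finset.mem_filter, Finset.mem_univ, true_and]
      constructor
      · rintro rfl
        exact hQmem i
      · intro hmem
        exact hvuniq i (Q i) j (hQmem i) hmem
    rw [hfilter, hAt j, ← ht]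
  · rintro ⟨Q, hQ⟩
    set X : Finset (BPVtx n k) :=
      (univ.image BPVtx.y) ∪ (univ.image BPVtx.z)
        ∪ (univ.image fun i => BPVtx.v i (Q i)) with hXdef
    have hxX : BPVtx.x ∉ X := by simp [hXdef]
    have hyX : ∀ j, BPVtx.y j ∈ X := fun j => by simp [hXdef]
    have hzX : ∀ j, BPVtx.z j ∈ X := fun j => by simp [hXdef]
    have hvX : ∀ i j, (BPVtx.v i j ∈ X ↔ Q i = j) := by
      intro i j
      simp only [hXdef, Finset.mem_union, Finset.mem_image, Finset.mem_univ, true_and]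
      constructor
      · rintro ((⟨i', h⟩ | ⟨i', h⟩) | ⟨i', h⟩)
        · exact absurd h (by simp)
        · exact absurd h (by simp)
        · simp only [BPVtx.v.injEq] at h
          obtain ⟨rfl, h2⟩ := h
          exact h2
      · rintro rfl; exact Or.inr ⟨i, rfl⟩
    have hA' : ∀ j, (∑ i ∈ univ.filter (fun i => Q i = j), (a i : ℚ))
        = (s : ℚ) / (k : ℚ) := by
      intro j
      rw [eq_div_iff hk0, mul_comm]
      exact_mod_cast hQ j
    refine ⟨X, ⟨BPVtx.y ⟨0, by omega⟩, hyX _⟩, ?_⟩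
    intro u hu
    cases u with
    | x => exact absurd hu hxX
    | y j =>
      rw [ut_eq hk, ut_eq hk]
      simp only [P10]
      rw [utP_y hk, sumX_y hk, if_neg hxX, if_pos (hyX _), if_pos (hyX _),
        if_pos (hzX _)]
      have hv : ∑ i, (if BPVtx.v i j ∈ X then (a i : ℚ) + ε else 0)
          = (s : ℚ) / (k : ℚ) + (univ.filter (fun i => Q i = j)).card * ε := by
        simp only [hvX]
        rw [← Finset.sum_filter, Finset.sum_add_distrib, Finset.sum_const,
          nsmul_eq_mul, hA' j]
      rw [hv]
      have hcard : (0 : ℚ) ≤ ((univ.filter (fun i => Q i = j)).card : ℚ) * ε := by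
        positivity
      linarith
    | z j =>
      rw [ut_eq hk, ut_eq hk]
      simp only [P10]
      rw [utP_z hk, sumX_z hk, if_pos (hyX _), if_pos (hzX _), if_pos (hzX _)]
      have hv : ∑ i, (if BPVtx.v i j ∈ X then -(a i : ℚ) else 0)
          = -((s : ℚ) / (k : ℚ)) := by
        simp only [hvX]
        rw [← Finset.sum_filter, Finset.sum_neg_distrib, hA' j]
      rw [hv]
      linarith
    | v i j =>
      have hQi : Q i = j := (hvX i j).mp hu
      rw [ut_eq hk, ut_eq hk]
      simp only [P10]
      rw [utP_v hk, sumX_v hk, if_pos (hyX _), if_pos (hzX _)]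
      have hcl : ∑ j', (if BPVtx.v i j' ∈ X ∧ j' ≠ j then (ρ : ℚ) else 0) = 0 :=
        Finset.sum_eq_zero fun j' _ => if_neg (by
          rintro ⟨hmem, hne⟩
          exact hne (((hvX i j').mp hmem) ▸ hQi ▸ rfl))
      rw [hcl]
      linarith
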